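/- Let G and H be groups and let F be a field. Then the group algebra F(F^× × G × H), with its standard grading by the group F^× × G × H, together with the projections π₁ : F(F^× × G × H) → FG, u_{(α,g,h)} ↦ α·u_g, and π₂ : F(F^× × G × H) → FH, u_{(α,g,h)} ↦ u_h, is the product of FG and FH (each with its standard grading) in both categories tilde{GrAlg_F} and tilde{GrAlg¹_F}. -/

import Mathlib

set_option autoImplicit false

universe u

/-- A group grading on a (not necessarily unital) associative algebra over `F`:
an object of the category `GrAlg_F`. -/
structure GrAlg (F : Type u) [Field F] : Type (u + 1) where
  A : Type u
  [ringA : NonUnitalRing A]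
  [modA : Module F A]
  [sccA : SMulCommClass F A A]
  [istA : IsScalarTower F A A]
  G : Type u
  [grpG : Group G]
  comp : G → Submodule F A
  mul_mem : ∀ ⦃g h : G⦄ ⦃a b : A⦄, a ∈ comp g → b ∈ comp h → a * b ∈ comp (g * h)
  independent : iSupIndep comp
  spans : (⨆ g, comp g) = ⊤

attribute [instance] GrAlg.ringA GrAlg.modA GrAlg.sccA GrAlg.istA GrAlg.grpG

variable {F : Type u} [Field F]

/-- The grading is trivial if all components other than the identity component vanish. -/
def GrAlg.IsTrivialGrading (X : GrAlg F) : Prop := ∀ g : X.G, g ≠ 1 → X.comp g = ⊥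

/-- The support of a grading. -/
def GrAlg.supp (X : GrAlg F) : Set X.G := {g | X.comp g ≠ ⊥}

/-- A morphism in `GrAlg_F`: an algebra homomorphism mapping each graded component
into some graded component. -/
@[ext]
structure GrAlgHom (X Y : GrAlg F) where
  hom : X.A →ₙₐ[F] Y.A
  graded : ∀ g : X.G, ∃ h : Y.G, ∀ a ∈ X.comp g, hom a ∈ Y.comp h

def GrAlgHom.id (X : GrAlg F) : GrAlgHom X X where
  hom := NonUnitalAlgHom.id F X.A
  graded g := ⟨g, fun a ha => ha⟩

def GrAlgHom.comp {X Y Z : GrAlg F} (g : GrAlgHom Y Z) (f : GrAlgHom X Y) :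
    GrAlgHom X Z where
  hom := g.hom.comp f.hom
  graded s := by
    obtain ⟨h, hh⟩ := f.graded s
    obtain ⟨k, hk⟩ := g.graded h
    exact ⟨k, fun a ha => by simpa using hk _ (hh a ha)⟩

/-- An object of `GrAlg¹_F`: a group grading on a unital associative algebra. -/
structure GrAlgOne (F : Type u) [Field F] extends GrAlg F : Type (u + 1) where
  one : A
  one_mul : ∀ a : A, one * a = a
  mul_one : ∀ a : A, a * one = a

/-- A morphism in `GrAlg¹_F`: a unital graded algebra homomorphism. -/
@[ext]
structure GrAlgOneHom (X Y : GrAlgOne F) extends GrAlgHom X.toGrAlg Y.toGrAlg where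
  map_one : toGrAlgHom.hom X.one = Y.one

def GrAlgOneHom.id (X : GrAlgOne F) : GrAlgOneHom X X where
  toGrAlgHom := GrAlgHom.id X.toGrAlg
  map_one := rfl

def GrAlgOneHom.comp {X Y Z : GrAlgOne F} (g : GrAlgOneHom Y Z) (f : GrAlgOneHom X Y) :
    GrAlgOneHom X Z where
  toGrAlgHom := g.toGrAlgHom.comp f.toGrAlgHom
  map_one := by
    show (g.toGrAlgHom.hom.comp f.toGrAlgHom.hom) X.one = Z.one
    simp [f.map_one, g.map_one]

/-- A morphism in `tilde{GrAlg_F}`: a graded injective homomorphism. -/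
@[ext]
structure TGrAlgHom (X Y : GrAlg F) extends GrAlgHom X Y where
  injOn : ∀ g : X.G, Set.InjOn toGrAlgHom.hom (X.comp g)

def TGrAlgHom.id (X : GrAlg F) : TGrAlgHom X X where
  toGrAlgHom := GrAlgHom.id X
  injOn g := fun a _ b _ hab => hab

def TGrAlgHom.comp {X Y Z : GrAlg F} (g : TGrAlgHom Y Z) (f : TGrAlgHom X Y) :
    TGrAlgHom X Z where
  toGrAlgHom := g.toGrAlgHom.comp f.toGrAlgHom
  injOn s := by
    intro a ha b hb hab
    obtain ⟨h, hh⟩ := f.graded s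
    exact f.injOn s ha hb (g.injOn h (hh a ha) (hh b hb) hab)

/-- A morphism in `tilde{GrAlg¹_F}`: a unital graded injective homomorphism. -/
@[ext]
structure TGrAlgOneHom (X Y : GrAlgOne F) extends TGrAlgHom X.toGrAlg Y.toGrAlg where
  map_one : toGrAlgHom.hom X.one = Y.one

def TGrAlgOneHom.id (X : GrAlgOne F) : TGrAlgOneHom X X where
  toTGrAlgHom := TGrAlgHom.id X.toGrAlg
  map_one := rfl

def TGrAlgOneHom.comp {X Y Z : GrAlgOne F} (g : TGrAlgOneHom Y Z) (f : TGrAlgOneHom X Y) :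
    TGrAlgOneHom X Z where
  toTGrAlgHom := g.toTGrAlgHom.comp f.toTGrAlgHom
  map_one := by
    show (g.toGrAlgHom.hom.comp f.toGrAlgHom.hom) X.one = Z.one
    simp [f.map_one, g.map_one]
/-! The group algebra `FG` with its standard grading, as an object of our categories. -/

lemma stdComp_eq {F : Type u} [Field F] {G : Type u} [Group G] (g : G) :
    Submodule.span F {(MonoidAlgebra.single g (1 : F) : MonoidAlgebra F G)} =
      Submodule.span F {MonoidAlgebra.basis G F g} := by
  rw [MonoidAlgebra.basis_apply]

/-- The group algebra `FG` with its standard grading `FG = ⊕_{g ∈ G} F·u_g`. -/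
noncomputable def grpAlg (F : Type u) [Field F] (G : Type u) [Group G] : GrAlg F where
  A := MonoidAlgebra F G
  G := G
  comp g := Submodule.span F {MonoidAlgebra.single g 1}
  mul_mem := by
    intro g h a b ha hb
    rw [Submodule.mem_span_singleton] at ha hb ⊢
    obtain ⟨c, rfl⟩ := ha
    obtain ⟨d, rfl⟩ := hb
    refine ⟨c * d, ?_⟩
    rw [smul_mul_assoc, mul_smul_comm, MonoidAlgebra.single_mul_single, one_mul, smul_smul]
  independent := by
    intro g
    have key := (MonoidAlgebra.basis G F).linearIndependent.iSupIndep_span_singleton g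
    simpa only [MonoidAlgebra.basis_apply] using key
  spans := by
    rw [Submodule.iSup_span, ← (MonoidAlgebra.basis G F).span_eq]
    congr 1
    ext x
    simp

/-- The group algebra `FG` with its standard grading, as an object of `GrAlg¹_F`. -/
noncomputable def grpAlgOne (F : Type u) [Field F] (G : Type u) [Group G] : GrAlgOne F :=
  GrAlgOne.mk (grpAlg F G) (1 : MonoidAlgebra F G)
    (fun (a : MonoidAlgebra F G) => one_mul a) (fun (a : MonoidAlgebra F G) => mul_one a)
section ProductAux

open MonoidAlgebra

variable {G H : Type u} [Group G] [Group H]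

lemma mem_grpAlg_comp {g : G} {x : MonoidAlgebra F G} :
    x ∈ (grpAlg F G).comp g ↔ ∃ c : F, x = MonoidAlgebra.single g c := by
  show x ∈ Submodule.span F {MonoidAlgebra.single g 1} ↔ _
  rw [Submodule.mem_span_singleton]
  constructor
  · rintro ⟨c, rfl⟩; exact ⟨c, by rw [MonoidAlgebra.smul_single', mul_one]⟩
  · rintro ⟨c, rfl⟩; exact ⟨c, by rw [MonoidAlgebra.smul_single', mul_one]⟩

/-- Convert a non-unital algebra hom into a linear map. -/
def nuaLin {A B : Type u} [NonUnitalRing A] [Module F A] [NonUnitalRing B] [Module F B]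
    (f : A →ₙₐ[F] B) : A →ₗ[F] B where
  toFun := f
  map_add' := map_add f
  map_smul' := map_smul f

/-- Two linear maps agreeing on all homogeneous elements agree. -/
lemma GrAlg.hom_ext (D : GrAlg F) {M : Type u} [AddCommMonoid M] [Module F M]
    {L L' : D.A →ₗ[F] M} (h : ∀ d : D.G, ∀ a ∈ D.comp d, L a = L' a) :
    ∀ x : D.A, L x = L' x := by
  have hle : (⊤ : Submodule F D.A) ≤ LinearMap.eqLocus L L' := by
    rw [← D.spans]
    exact iSup_le fun d x hx => h d x hx
  exact fun x => hle trivial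

end ProductAux
section ProductAux2

open MonoidAlgebra

variable (F) {G H : Type u} [Group G] [Group H]

/-- The monoid homomorphism `(α, g, h) ↦ α·u_g`. -/
noncomputable def p1mon (G H : Type u) [Group G] [Group H] :
    (Fˣ × G × H) →* MonoidAlgebra F G where
  toFun x := MonoidAlgebra.single x.2.1 (x.1 : F)
  map_one' := by rw [MonoidAlgebra.one_def]; rfl
  map_mul' x y := by
    rw [MonoidAlgebra.single_mul_single]; rfl

/-- The monoid homomorphism `(α, g, h) ↦ u_h`. -/
noncomputable def p2mon (G H : Type u) [Group G] [Group H] :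
    (Fˣ × G × H) →* MonoidAlgebra F H where
  toFun x := MonoidAlgebra.single x.2.2 (1 : F)
  map_one' := by rw [MonoidAlgebra.one_def]; rfl
  map_mul' x y := by
    rw [MonoidAlgebra.single_mul_single, mul_one]; rfl

noncomputable def p1alg (G H : Type u) [Group G] [Group H] :
    MonoidAlgebra F (Fˣ × G × H) →ₐ[F] MonoidAlgebra F G :=
  MonoidAlgebra.lift F (MonoidAlgebra F G) (Fˣ × G × H) (p1mon F G H)

noncomputable def p2alg (G H : Type u) [Group G] [Group H] :
    MonoidAlgebra F (Fˣ × G × H) →ₐ[F] MonoidAlgebra F H :=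
  MonoidAlgebra.lift F (MonoidAlgebra F H) (Fˣ × G × H) (p2mon F G H)

lemma p1alg_single (x : Fˣ × G × H) (c : F) :
    p1alg F G H (MonoidAlgebra.single x c) = MonoidAlgebra.single x.2.1 ((x.1 : F) * c) := by
  rw [p1alg, MonoidAlgebra.lift_single]
  show c • MonoidAlgebra.single x.2.1 (x.1 : F) = _
  rw [MonoidAlgebra.smul_single', mul_comm]

lemma p2alg_single (x : Fˣ × G × H) (c : F) :
    p2alg F G H (MonoidAlgebra.single x c) = MonoidAlgebra.single x.2.2 c := by
  rw [p2alg, MonoidAlgebra.lift_single]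
  show c • MonoidAlgebra.single x.2.2 (1 : F) = _
  rw [MonoidAlgebra.smul_single', mul_one]

/-- The first projection as a morphism of `tilde{GrAlg_F}`. -/
noncomputable def proj1 (G H : Type u) [Group G] [Group H] :
    TGrAlgHom (grpAlg F (Fˣ × G × H)) (grpAlg F G) where
  hom := (p1alg F G H).toNonUnitalAlgHom
  graded x := by
    refine ⟨x.2.1, fun a ha => ?_⟩
    obtain ⟨c, rfl⟩ := mem_grpAlg_comp.mp ha
    exact mem_grpAlg_comp.mpr ⟨(x.1 : F) * c, p1alg_single F x c⟩
  injOn x := by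
    change Fˣ × G × H at x
    intro a ha b hb hab
    obtain ⟨c, rfl⟩ := mem_grpAlg_comp.mp ha
    obtain ⟨c', rfl⟩ := mem_grpAlg_comp.mp hb
    have hab' : p1alg F G H (MonoidAlgebra.single x c)
        = p1alg F G H (MonoidAlgebra.single x c') := hab
    rw [p1alg_single, p1alg_single] at hab'
    have hcc : (x.1 : F) * c = (x.1 : F) * c' := MonoidAlgebra.single_right_injective hab'
    rw [mul_left_cancel₀ (Units.ne_zero x.1) hcc]

/-- The second projection as a morphism of `tilde{GrAlg_F}`. -/
noncomputable def proj2 (G H : Type u) [Group G] [Group H] :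
    TGrAlgHom (grpAlg F (Fˣ × G × H)) (grpAlg F H) where
  hom := (p2alg F G H).toNonUnitalAlgHom
  graded x := by
    refine ⟨x.2.2, fun a ha => ?_⟩
    obtain ⟨c, rfl⟩ := mem_grpAlg_comp.mp ha
    exact mem_grpAlg_comp.mpr ⟨c, p2alg_single F x c⟩
  injOn x := by
    change Fˣ × G × H at x
    intro a ha b hb hab
    obtain ⟨c, rfl⟩ := mem_grpAlg_comp.mp ha
    obtain ⟨c', rfl⟩ := mem_grpAlg_comp.mp hb
    have hab' : p2alg F G H (MonoidAlgebra.single x c)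
        = p2alg F G H (MonoidAlgebra.single x c') := hab
    rw [p2alg_single, p2alg_single] at hab'
    rw [show c = c' from MonoidAlgebra.single_right_injective hab']

lemma proj1_hom_single (x : Fˣ × G × H) (c : F) :
    (proj1 F G H).hom (MonoidAlgebra.single x c) = MonoidAlgebra.single x.2.1 ((x.1 : F) * c) :=
  p1alg_single F x c

lemma proj2_hom_single (x : Fˣ × G × H) (c : F) :
    (proj2 F G H).hom (MonoidAlgebra.single x c) = MonoidAlgebra.single x.2.2 c :=
  p2alg_single F x c

end ProductAux2
section ProductAux3

/-- In a graded unital algebra, the identity is homogeneous of degree 1. -/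
lemma GrAlgOne.one_mem_comp_one (D : GrAlgOne F) : D.one ∈ D.toGrAlg.comp 1 := by
  classical
  -- decompose `one` as `e + r` with `e` in the identity component
  have hsup : D.toGrAlg.comp 1 ⊔ (⨆ d : D.G, ⨆ _ : d ≠ 1, D.toGrAlg.comp d) = ⊤ := by
    rw [← D.spans]
    apply le_antisymm
    · exact sup_le (le_iSup _ 1) (iSup_le fun d => iSup_le fun _ => le_iSup _ d)
    · apply iSup_le; intro d
      by_cases hd : d = 1
      · subst hd; exact le_sup_left
      · exact le_sup_of_le_right (le_iSup_of_le d (le_iSup_of_le hd le_rfl))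
  obtain ⟨e, he, r, hr, her⟩ :=
    Submodule.mem_sup.mp (hsup ▸ (Submodule.mem_top : D.one ∈ (⊤ : Submodule F D.A)))
  -- every homogeneous element is fixed by right multiplication by `e`
  have key : ∀ h : D.G, ∀ b ∈ D.toGrAlg.comp h, b * e = b := by
    intro h b hb
    have hbe : b * e ∈ D.toGrAlg.comp h := by
      have h1 := D.mul_mem hb he
      rw [_root_.mul_one h] at h1; exact h1
    have hbr : b * r ∈ ⨆ d : D.G, ⨆ _ : d ≠ h, D.toGrAlg.comp d := by
      have hle : (⨆ d : D.G, ⨆ _ : d ≠ 1, D.toGrAlg.comp d) ≤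
          Submodule.comap (LinearMap.mulLeft F b)
            (⨆ d : D.G, ⨆ _ : d ≠ h, D.toGrAlg.comp d) := by
        apply iSup_le; intro d; apply iSup_le; intro hd
        intro x hx
        have hmem : b * x ∈ D.toGrAlg.comp (h * d) := D.mul_mem hb hx
        have hne : h * d ≠ h := fun hcon => hd (by
          have h2 : h * d = h * 1 := by rw [_root_.mul_one h]; exact hcon
          exact mul_left_cancel h2)
        exact Submodule.mem_iSup_of_mem (h * d) (Submodule.mem_iSup_of_mem hne hmem)
      exact hle hr
    have hsub : b - b * e ∈ D.toGrAlg.comp h := sub_mem hb hbe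
    have heq : b - b * e = b * r := by
      have h3 : b * e + b * r = b := by rw [← mul_add, her, D.mul_one]
      exact (eq_sub_of_add_eq' h3).symm
    have hz : b - b * e = 0 := by
      have hmem2 : b - b * e ∈ D.toGrAlg.comp h ⊓ (⨆ d : D.G, ⨆ _ : d ≠ h, D.toGrAlg.comp d) :=
        ⟨hsub, heq ▸ hbr⟩
      exact (Submodule.eq_bot_iff _).mp (disjoint_iff.mp (D.independent h)) _ hmem2
    rw [sub_eq_zero] at hz
    exact hz.symm
  -- hence right multiplication by `e` is the identity everywhere
  have all : ∀ a : D.A, a * e = a := by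
    have := D.toGrAlg.hom_ext (L := LinearMap.mulRight F e) (L' := LinearMap.id)
      (fun d a ha => key d a ha)
    exact fun a => this a
  have h1 : D.one * e = D.one := all D.one
  rw [D.one_mul e] at h1
  rwa [← h1]

end ProductAux3
section ProductAux4

open scoped DirectSum

variable {G H : Type u} [Group G] [Group H]

lemma TGrAlgHom.hom_ext {X Y : GrAlg F} {f g : TGrAlgHom X Y}
    (h : ∀ x, f.hom x = g.hom x) : f = g := by
  obtain ⟨⟨fh, fg⟩, fi⟩ := f
  obtain ⟨⟨gh, gg⟩, gi⟩ := g
  have : fh = gh := NonUnitalAlgHom.ext h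
  subst this
  rfl

lemma uniq_psi (D : GrAlg F) (α : TGrAlgHom D (grpAlg F G)) (β : TGrAlgHom D (grpAlg F H)) :
    ∃! ψ : TGrAlgHom D (grpAlg F (Fˣ × G × H)),
      (proj1 F G H).comp ψ = α ∧ (proj2 F G H).comp ψ = β := by
  classical
  obtain ⟨gd, hgd⟩ := Classical.axiomOfChoice α.graded
  obtain ⟨hd, hhd⟩ := Classical.axiomOfChoice β.graded
  change D.G → G at gd
  change D.G → H at hd
  let αl : D.A →ₗ[F] MonoidAlgebra F G := nuaLin α.hom
  let βl : D.A →ₗ[F] MonoidAlgebra F H := nuaLin β.hom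
  -- the homogeneous components map to "singles"
  have hcA : ∀ d : D.G, ∀ a ∈ D.comp d,
      αl a = MonoidAlgebra.single (gd d) ((αl a).coeff (gd d)) := by
    intro d a ha
    obtain ⟨c, hc⟩ := mem_grpAlg_comp.mp (hgd d a ha)
    have hc' : αl a = MonoidAlgebra.single (gd d) c := hc
    rw [hc', MonoidAlgebra.coeff_single, Finsupp.single_eq_same]
  have hcB : ∀ d : D.G, ∀ a ∈ D.comp d,
      βl a = MonoidAlgebra.single (hd d) ((βl a).coeff (hd d)) := by
    intro d a ha
    obtain ⟨c, hc⟩ := mem_grpAlg_comp.mp (hhd d a ha)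
    have hc' : βl a = MonoidAlgebra.single (hd d) c := hc
    rw [hc', MonoidAlgebra.coeff_single, Finsupp.single_eq_same]
  -- vanishing coefficient forces the element to vanish
  have hA0 : ∀ d : D.G, ∀ a ∈ D.comp d, (αl a).coeff (gd d) = 0 → a = 0 := by
    intro d a ha h0
    refine α.injOn d ha (Submodule.zero_mem _) ?_
    show αl a = αl 0
    rw [map_zero, hcA d a ha, h0]
    exact MonoidAlgebra.single_zero _
  have hB0 : ∀ d : D.G, ∀ a ∈ D.comp d, (βl a).coeff (hd d) = 0 → a = 0 := by
    intro d a ha h0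
    refine β.injOn d ha (Submodule.zero_mem _) ?_
    show βl a = βl 0
    rw [map_zero, hcB d a ha, h0]
    exact MonoidAlgebra.single_zero _
  -- proportionality inside a component
  have hprop : ∀ d : D.G, ∀ a ∈ D.comp d, ∀ b ∈ D.comp d,
      (αl a).coeff (gd d) • b = (αl b).coeff (gd d) • a := by
    intro d a ha b hb
    have hmem : (αl a).coeff (gd d) • b - (αl b).coeff (gd d) • a ∈ D.comp d :=
      sub_mem (Submodule.smul_mem _ _ hb) (Submodule.smul_mem _ _ ha)
    have hz : αl ((αl a).coeff (gd d) • b - (αl b).coeff (gd d) • a) = 0 := by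
      have hsa := hcA d a ha
      have hsb := hcA d b hb
      rw [map_sub, map_smul, map_smul]
      generalize hca : (αl a).coeff (gd d) = ca at hsa ⊢
      generalize hcb : (αl b).coeff (gd d) = cb at hsb ⊢
      rw [hsa, hsb, MonoidAlgebra.smul_single', MonoidAlgebra.smul_single', mul_comm, sub_self]
    have := α.injOn d hmem (Submodule.zero_mem _) (by
      show αl _ = αl 0
      rw [hz, map_zero])
    rwa [sub_eq_zero] at this
  have hcross : ∀ d : D.G, ∀ a ∈ D.comp d, ∀ b ∈ D.comp d,
      (αl a).coeff (gd d) * (βl b).coeff (hd d) = (αl b).coeff (gd d) * (βl a).coeff (hd d) := by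
    intro d a ha b hb
    have h1 := congrArg (fun x => (βl x).coeff (hd d)) (hprop d a ha b hb)
    simpa [map_smul, MonoidAlgebra.coeff_smul, Finsupp.smul_apply, smul_eq_mul] using h1
  -- the units
  let ud : D.G → Fˣ := fun d =>
    if h : ∃ a, a ∈ D.comp d ∧ a ≠ 0 then
      Units.mk0 ((αl h.choose).coeff (gd d) / (βl h.choose).coeff (hd d))
        (div_ne_zero (fun hz => h.choose_spec.2 (hA0 d _ h.choose_spec.1 hz))
          (fun hz => h.choose_spec.2 (hB0 d _ h.choose_spec.1 hz)))
    else 1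
  have hud : ∀ d : D.G, ∀ a ∈ D.comp d, (αl a).coeff (gd d) = (ud d : F) * (βl a).coeff (hd d) := by
    intro d a ha
    by_cases ha0 : a = 0
    · subst ha0
      rw [map_zero, map_zero]
      simp
    · have hex : ∃ x, x ∈ D.comp d ∧ x ≠ 0 := ⟨a, ha, ha0⟩
      have hval : (ud d : F) = (αl hex.choose).coeff (gd d) / (βl hex.choose).coeff (hd d) := by
        show ((if h : ∃ x, x ∈ D.comp d ∧ x ≠ 0 then _ else 1 : Fˣ) : F) = _
        rw [dif_pos hex]
        rfl
      have hw := hex.choose_spec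
      have hBw : (βl hex.choose).coeff (hd d) ≠ 0 :=
        fun hz => hw.2 (hB0 d _ hw.1 hz)
      rw [hval, div_mul_eq_mul_div, eq_div_iff hBw]
      exact hcross d a ha hex.choose hw.1
  -- the grading group element attached to each component
  let k : D.G → (Fˣ × G × H) := fun d => (ud d, gd d, hd d)
  -- the linear map underlying `ψ`
  have hInt : DirectSum.IsInternal D.comp :=
    DirectSum.isInternal_submodule_of_iSupIndep_of_iSup_eq_top D.independent D.spans
  let eqv : (⨁ d : D.G, ↥(D.comp d)) ≃ₗ[F] D.A :=
    LinearEquiv.ofBijective (DirectSum.coeLinearMap D.comp) hInt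
  let fco : ∀ d : D.G, ↥(D.comp d) →ₗ[F] MonoidAlgebra F (Fˣ × G × H) := fun d =>
    (MonoidAlgebra.lsingle (R := F) (k d)).comp ((Finsupp.lapply (hd d)).comp
      ((MonoidAlgebra.coeffLinearEquiv F).toLinearMap.comp (βl.comp (D.comp d).subtype)))
  let ψlin : D.A →ₗ[F] MonoidAlgebra F (Fˣ × G × H) :=
    (DirectSum.toModule F D.G _ fco).comp (eqv.symm : D.A →ₗ[F] ⨁ d : D.G, ↥(D.comp d))
  have hψ : ∀ d : D.G, ∀ a, a ∈ D.comp d →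
      ψlin a = MonoidAlgebra.single (k d) ((βl a).coeff (hd d)) := by
    intro d a ha
    have h1 : eqv.symm a = DirectSum.lof F D.G (fun d => ↥(D.comp d)) d ⟨a, ha⟩ := by
      apply eqv.injective
      have h2 : eqv (DirectSum.lof F D.G (fun d => ↥(D.comp d)) d ⟨a, ha⟩) = a := by
        show DirectSum.coeLinearMap D.comp _ = a
        rw [DirectSum.lof_eq_of, DirectSum.coeLinearMap_of]
      rw [LinearEquiv.apply_symm_apply, h2]
    show (DirectSum.toModule F D.G _ fco) (eqv.symm a) = _
    rw [h1, DirectSum.toModule_lof]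
    rfl
  -- multiplicativity on homogeneous elements
  have hmul_homog : ∀ (d d' : D.G) (a b : D.A), a ∈ D.comp d → b ∈ D.comp d' →
      ψlin (a * b) = ψlin a * ψlin b := by
    intro d d' a b ha hb
    have hab : a * b ∈ D.comp (d * d') := D.mul_mem ha hb
    rw [hψ _ _ hab, hψ _ _ ha, hψ _ _ hb, MonoidAlgebra.single_mul_single]
    by_cases ha0 : a = 0
    · subst ha0
      simp
    by_cases hb0 : b = 0
    · subst hb0
      simp
    have hBa : (βl a).coeff (hd d) ≠ 0 := fun hz => ha0 (hB0 d a ha hz)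
    have hBb : (βl b).coeff (hd d') ≠ 0 := fun hz => hb0 (hB0 d' b hb hz)
    have hAa : (αl a).coeff (gd d) ≠ 0 := fun hz => ha0 (hA0 d a ha hz)
    have hAb : (αl b).coeff (gd d') ≠ 0 := fun hz => hb0 (hA0 d' b hb hz)
    -- compare the β-images
    have e1 : (MonoidAlgebra.single (hd (d * d')) ((βl (a * b)).coeff (hd (d * d')))
        : MonoidAlgebra F H) = MonoidAlgebra.single (hd d * hd d') ((βl a).coeff (hd d) * (βl b).coeff (hd d')) := by
      rw [← hcB _ _ hab, ← MonoidAlgebra.single_mul_single, ← hcB _ _ ha, ← hcB _ _ hb]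
      exact map_mul β.hom a b
    have e1' := MonoidAlgebra.single_inj.mp e1
    rcases e1' with ⟨eh, ec⟩ | ⟨_, h0⟩
    swap
    · exact absurd h0 (mul_ne_zero hBa hBb)
    -- compare the α-images
    have e2 : (MonoidAlgebra.single (gd (d * d')) ((αl (a * b)).coeff (gd (d * d')))
        : MonoidAlgebra F G) = MonoidAlgebra.single (gd d * gd d') ((αl a).coeff (gd d) * (αl b).coeff (gd d')) := by
      rw [← hcA _ _ hab, ← MonoidAlgebra.single_mul_single, ← hcA _ _ ha, ← hcA _ _ hb]
      exact map_mul α.hom a b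
    have e2' := MonoidAlgebra.single_inj.mp e2
    rcases e2' with ⟨eg, ecg⟩ | ⟨_, h0⟩
    swap
    · exact absurd h0 (mul_ne_zero hAa hAb)
    -- the units multiply
    have eu : ud (d * d') = ud d * ud d' := by
      apply Units.ext
      have h1 : (ud (d * d') : F) * ((βl a).coeff (hd d) * (βl b).coeff (hd d')) =
          ((ud d : F) * (ud d' : F)) * ((βl a).coeff (hd d) * (βl b).coeff (hd d')) := by
        rw [← ec, ← hud _ _ hab, ecg, hud d a ha, hud d' b hb, ec]
        ring
      have := mul_right_cancel₀ (mul_ne_zero hBa hBb) h1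
      rw [this, Units.val_mul]
    have ek : k (d * d') = k d * k d' := by
      show (ud (d * d'), gd (d * d'), hd (d * d')) = _
      rw [eu, eg, eh]
      rfl
    rw [ek, ec]
  -- multiplicativity in general
  have hmul_right : ∀ (d' : D.G) (b : D.A), b ∈ D.comp d' →
      ∀ x : D.A, ψlin (x * b) = ψlin x * ψlin b := by
    intro d' b hb
    have := D.hom_ext (L := ψlin.comp (LinearMap.mulRight F b))
      (L' := (LinearMap.mulRight F (ψlin b)).comp ψlin)
      (fun d a ha => by
        simp only [LinearMap.comp_apply, LinearMap.mulRight_apply]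
        exact hmul_homog d d' a b ha hb)
    intro x
    simpa only [LinearMap.comp_apply, LinearMap.mulRight_apply] using this x
  have hmul : ∀ x y : D.A, ψlin (x * y) = ψlin x * ψlin y := by
    intro x y
    have := D.hom_ext (L := ψlin.comp (LinearMap.mulLeft F x))
      (L' := (LinearMap.mulLeft F (ψlin x)).comp ψlin)
      (fun d' b hb => by
        simp only [LinearMap.comp_apply, LinearMap.mulLeft_apply]
        exact hmul_right d' b hb x)
    simpa only [LinearMap.comp_apply, LinearMap.mulLeft_apply] using this y
  -- assemble the morphism
  let ψnua : D.A →ₙₐ[F] MonoidAlgebra F (Fˣ × G × H) :=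
    { toFun := ψlin
      map_add' := ψlin.map_add
      map_smul' := ψlin.map_smul
      map_zero' := ψlin.map_zero
      map_mul' := hmul }
  have hψnua : ∀ x : D.A, ψnua x = ψlin x := fun _ => rfl
  let ψ : TGrAlgHom D (grpAlg F (Fˣ × G × H)) :=
    { hom := ψnua
      graded := fun d => ⟨k d, fun a ha =>
        mem_grpAlg_comp.mpr ⟨(βl a).coeff (hd d), hψ d a ha⟩⟩
      injOn := fun d a ha b hb heq => by
        have h1 : MonoidAlgebra.single (k d) ((βl a).coeff (hd d))
            = MonoidAlgebra.single (k d) ((βl b).coeff (hd d)) := by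
          rw [← hψ d a ha, ← hψ d b hb]
          exact heq
        have h2 : (βl a).coeff (hd d) = (βl b).coeff (hd d) := MonoidAlgebra.single_right_injective h1
        refine β.injOn d ha hb ?_
        show βl a = βl b
        rw [hcB d a ha, hcB d b hb, h2] }
  have hψhom : ∀ x : D.A, ψ.hom x = ψlin x := fun _ => rfl
  refine ⟨ψ, ⟨?_, ?_⟩, ?_⟩
  · -- proj1 ∘ ψ = α
    apply TGrAlgHom.hom_ext
    have := D.hom_ext (L := (nuaLin (proj1 F G H).hom).comp ψlin) (L' := αl)
      (fun d a ha => by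
        show (proj1 F G H).hom (ψlin a) = αl a
        rw [hψ d a ha, proj1_hom_single, hcA d a ha, hud d a ha])
    intro x
    exact this x
  · -- proj2 ∘ ψ = β
    apply TGrAlgHom.hom_ext
    have := D.hom_ext (L := (nuaLin (proj2 F G H).hom).comp ψlin) (L' := βl)
      (fun d a ha => by
        show (proj2 F G H).hom (ψlin a) = βl a
        rw [hψ d a ha, proj2_hom_single]
        exact (hcB d a ha).symm)
    intro x
    exact this x
  · -- uniqueness
    intro ψ' hpair
    obtain ⟨h1', h2'⟩ := hpair
    apply TGrAlgHom.hom_ext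
    have hp1 : ∀ x : D.A, (proj1 F G H).hom (ψ'.hom x) = αl x :=
      fun x => congrArg (fun t : TGrAlgHom D (grpAlg F G) => t.hom x) h1'
    have hp2 : ∀ x : D.A, (proj2 F G H).hom (ψ'.hom x) = βl x :=
      fun x => congrArg (fun t : TGrAlgHom D (grpAlg F H) => t.hom x) h2'
    have := D.hom_ext (L := nuaLin ψ'.hom) (L' := ψlin)
      (fun d a ha => ?_)
    · intro x
      exact this x
    show ψ'.hom a = ψlin a
    by_cases ha0 : a = 0
    · subst ha0
      rw [map_zero, map_zero]
      rfl
    obtain ⟨k', hk'⟩ := ψ'.graded d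
    change Fˣ × G × H at k'
    obtain ⟨c, hc⟩ := mem_grpAlg_comp.mp (hk' a ha)
    have hc' : ψ'.hom a = MonoidAlgebra.single k' c := hc
    have hBa : (βl a).coeff (hd d) ≠ 0 := fun hz => ha0 (hB0 d a ha hz)
    have hAa : (αl a).coeff (gd d) ≠ 0 := fun hz => ha0 (hA0 d a ha hz)
    have e1 : (MonoidAlgebra.single k'.2.1 ((k'.1 : F) * c) : MonoidAlgebra F G)
        = MonoidAlgebra.single (gd d) ((αl a).coeff (gd d)) := by
      rw [← proj1_hom_single, ← hc', ← hcA d a ha]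
      exact hp1 a
    have e2 : (MonoidAlgebra.single k'.2.2 c : MonoidAlgebra F H)
        = MonoidAlgebra.single (hd d) ((βl a).coeff (hd d)) := by
      rw [← proj2_hom_single, ← hc', ← hcB d a ha]
      exact hp2 a
    rcases MonoidAlgebra.single_inj.mp e1 with ⟨eg, ecg⟩ | ⟨_, h0⟩
    swap
    · exact absurd h0 hAa
    rcases MonoidAlgebra.single_inj.mp e2 with ⟨eh, ech⟩ | ⟨_, h0⟩
    swap
    · exact absurd h0 hBa
    have hcne : c ≠ 0 := fun hz => hBa (by rw [← ech, hz])
    have eu : k'.1 = ud d := by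
      apply Units.ext
      have h1 : (k'.1 : F) * c = (ud d : F) * c := by
        rw [ecg, hud d a ha, ech]
      exact mul_right_cancel₀ hcne h1
    have ek : k' = k d := by
      show k' = (ud d, gd d, hd d)
      rw [← eu, ← eg, ← eh]
    rw [hc', ek, ech, hψ d a ha]

end ProductAux4
section ProductAux5

variable (F) {G H : Type u} [Group G] [Group H]

lemma TGrAlgOneHom.hom_ext {X Y : GrAlgOne F} {f g : TGrAlgOneHom X Y}
    (h : ∀ x, f.hom x = g.hom x) : f = g := by
  obtain ⟨⟨⟨fh, fg⟩, fi⟩, fo⟩ := f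
  obtain ⟨⟨⟨gh, gg⟩, gi⟩, go⟩ := g
  have : fh = gh := NonUnitalAlgHom.ext h
  subst this
  rfl

/-- The first projection as a morphism of `tilde{GrAlg¹_F}`. -/
noncomputable def proj1One (G H : Type u) [Group G] [Group H] :
    TGrAlgOneHom (grpAlgOne F (Fˣ × G × H)) (grpAlgOne F G) where
  toTGrAlgHom := proj1 F G H
  map_one := map_one (p1alg F G H)

/-- The second projection as a morphism of `tilde{GrAlg¹_F}`. -/
noncomputable def proj2One (G H : Type u) [Group G] [Group H] :
    TGrAlgOneHom (grpAlgOne F (Fˣ × G × H)) (grpAlgOne F H) where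
  toTGrAlgHom := proj2 F G H
  map_one := map_one (p2alg F G H)

variable {F}

lemma uniq_psi_one (D : GrAlgOne F) (α : TGrAlgOneHom D (grpAlgOne F G))
    (β : TGrAlgOneHom D (grpAlgOne F H)) :
    ∃! ψ : TGrAlgOneHom D (grpAlgOne F (Fˣ × G × H)),
      (proj1One F G H).comp ψ = α ∧ (proj2One F G H).comp ψ = β := by
  obtain ⟨ψ0, ⟨hc1, hc2⟩, huniq⟩ := uniq_psi D.toGrAlg α.toTGrAlgHom β.toTGrAlgHom
  have hone : ψ0.hom D.one = (grpAlgOne F (Fˣ × G × H)).one := by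
    obtain ⟨k₀, hk₀⟩ := ψ0.graded 1
    change Fˣ × G × H at k₀
    obtain ⟨c, hc⟩ := mem_grpAlg_comp.mp (hk₀ D.one D.one_mem_comp_one)
    have hp1 : (proj1 F G H).hom (ψ0.hom D.one) = α.hom D.one :=
      congrArg (fun t : TGrAlgHom D.toGrAlg (grpAlg F G) => t.hom D.one) hc1
    have hp2 : (proj2 F G H).hom (ψ0.hom D.one) = β.hom D.one :=
      congrArg (fun t : TGrAlgHom D.toGrAlg (grpAlg F H) => t.hom D.one) hc2
    have hα1 : (α.hom D.one : MonoidAlgebra F G) = MonoidAlgebra.single 1 1 := by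
      rw [α.map_one]
      exact MonoidAlgebra.one_def
    have hβ1 : (β.hom D.one : MonoidAlgebra F H) = MonoidAlgebra.single 1 1 := by
      rw [β.map_one]
      exact MonoidAlgebra.one_def
    have hc' : ψ0.hom D.one = MonoidAlgebra.single k₀ c := hc
    have e1 : (MonoidAlgebra.single k₀.2.1 ((k₀.1 : F) * c) : MonoidAlgebra F G)
        = MonoidAlgebra.single 1 1 := by
      rw [← proj1_hom_single F k₀ c, ← hc', hp1, hα1]
    have e2 : (MonoidAlgebra.single k₀.2.2 c : MonoidAlgebra F H)
        = MonoidAlgebra.single 1 1 := by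
      rw [← proj2_hom_single F k₀ c, ← hc', hp2, hβ1]
    rcases MonoidAlgebra.single_inj.mp e1 with ⟨eg, ecg⟩ | ⟨_, h0⟩
    swap
    · exact absurd h0 one_ne_zero
    rcases MonoidAlgebra.single_inj.mp e2 with ⟨eh, ech⟩ | ⟨_, h0⟩
    swap
    · exact absurd h0 one_ne_zero
    have hu : k₀.1 = 1 := by
      apply Units.ext
      have : (k₀.1 : F) * c = 1 := ecg
      rw [ech] at this
      simpa using this
    have hk : k₀ = 1 := by
      have : k₀ = (k₀.1, k₀.2.1, k₀.2.2) := rfl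
      rw [this, hu, eg, eh]
      rfl
    rw [hc', hk, ech]
    exact MonoidAlgebra.one_def.symm
  refine ⟨⟨ψ0, hone⟩, ⟨?_, ?_⟩, ?_⟩
  · apply TGrAlgOneHom.hom_ext
    intro x
    exact congrArg (fun t : TGrAlgHom D.toGrAlg (grpAlg F G) => t.hom x) hc1
  · apply TGrAlgOneHom.hom_ext
    intro x
    exact congrArg (fun t : TGrAlgHom D.toGrAlg (grpAlg F H) => t.hom x) hc2
  · intro ψ'' hpair
    obtain ⟨h1'', h2''⟩ := hpair
    have hA : (proj1 F G H).comp ψ''.toTGrAlgHom = α.toTGrAlgHom :=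
      congrArg TGrAlgOneHom.toTGrAlgHom h1''
    have hB : (proj2 F G H).comp ψ''.toTGrAlgHom = β.toTGrAlgHom :=
      congrArg TGrAlgOneHom.toTGrAlgHom h2''
    have := huniq ψ''.toTGrAlgHom ⟨hA, hB⟩
    apply TGrAlgOneHom.hom_ext
    intro x
    exact congrArg (fun t : TGrAlgHom D.toGrAlg (grpAlg F (Fˣ × G × H)) => t.hom x) this

end ProductAux5
section Statement

/-- `F(F^× × G × H)`, with the projections `u_{(α,g,h)} ↦ α·u_g` and
`u_{(α,g,h)} ↦ u_h`, is the product of `FG` and `FH` (with their standard gradings) in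
both categories `tilde{GrAlg_F}` and `tilde{GrAlg¹_F}`. -/
theorem group_algebra_product_tilde (F : Type u) [Field F]
    (G H : Type u) [Group G] [Group H] :
    (∃ (π₁ : TGrAlgHom (grpAlg F (Fˣ × G × H)) (grpAlg F G))
       (π₂ : TGrAlgHom (grpAlg F (Fˣ × G × H)) (grpAlg F H)),
      (∀ (α : Fˣ) (g : G) (h : H) (c : F),
        π₁.hom (MonoidAlgebra.single (α, g, h) c) = MonoidAlgebra.single g ((α : F) * c)) ∧
      (∀ (α : Fˣ) (g : G) (h : H) (c : F),
        π₂.hom (MonoidAlgebra.single (α, g, h) c) = MonoidAlgebra.single h c) ∧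
      ∀ (D : GrAlg F) (α : TGrAlgHom D (grpAlg F G)) (β : TGrAlgHom D (grpAlg F H)),
        ∃! ψ : TGrAlgHom D (grpAlg F (Fˣ × G × H)), π₁.comp ψ = α ∧ π₂.comp ψ = β)
    ∧
    (∃ (π₁ : TGrAlgOneHom (grpAlgOne F (Fˣ × G × H)) (grpAlgOne F G))
       (π₂ : TGrAlgOneHom (grpAlgOne F (Fˣ × G × H)) (grpAlgOne F H)),
      (∀ (α : Fˣ) (g : G) (h : H) (c : F),
        π₁.hom (MonoidAlgebra.single (α, g, h) c) = MonoidAlgebra.single g ((α : F) * c)) ∧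
      (∀ (α : Fˣ) (g : G) (h : H) (c : F),
        π₂.hom (MonoidAlgebra.single (α, g, h) c) = MonoidAlgebra.single h c) ∧
      ∀ (D : GrAlgOne F) (α : TGrAlgOneHom D (grpAlgOne F G))
        (β : TGrAlgOneHom D (grpAlgOne F H)),
        ∃! ψ : TGrAlgOneHom D (grpAlgOne F (Fˣ × G × H)),
          π₁.comp ψ = α ∧ π₂.comp ψ = β) := by
  constructor
  · exact ⟨proj1 F G H, proj2 F G H,
      fun a g h c => proj1_hom_single F (a, g, h) c,
      fun a g h c => proj2_hom_single F (a, g, h) c,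
      fun D α β => uniq_psi D α β⟩
  · exact ⟨proj1One F G H, proj2One F G H,
      fun a g h c => proj1_hom_single F (a, g, h) c,
      fun a g h c => proj2_hom_single F (a, g, h) c,
      fun D α β => uniq_psi_one D α β⟩

end Statement
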